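/- Let Γ be a discrete subgroup of SL(2,ℝ). Given a positive integer m, an integer ξ with ξ > 2m, a nonnegative integer δ, and a quasimodular polynomial F(z,X) ∈ QP^m_ξ(Γ), there exists a Jacobi-like form Φ(z,X) ∈ J_{ξ−2m−2δ}(Γ)_δ such that Π^δ_m Φ = F. -/

import Mathlib

noncomputable section

open Complex Polynomial

/-- The upper half plane `ℍ`, as a subset of `ℂ`. -/
def UHP : Set ℂ := {z : ℂ | 0 < z.im}

/-- `SL(2, ℝ)`. -/
abbrev SL2R := Matrix.SpecialLinearGroup (Fin 2) ℝ

/-- `GL⁺(2, ℝ)`, the group of real 2×2 matrices of positive determinant. -/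
abbrev GL2P := Matrix.GLPos (Fin 2) ℝ

/-- Topology on `SL(2,ℝ)` induced from the space of matrices (used to speak of
discrete subgroups of `SL(2,ℝ)`). -/
instance : TopologicalSpace SL2R :=
  TopologicalSpace.induced (fun g : SL2R => (g : Matrix (Fin 2) (Fin 2) ℝ)) inferInstance

/-- A function belongs to `𝓕` if it is holomorphic on the upper half plane. -/
def Hol (f : ℂ → ℂ) : Prop := DifferentiableOn ℂ f UHP

/-- `𝔍(γ, z) = cz + d` for `γ ∈ SL(2, ℝ)`. -/
def jJ (γ : SL2R) (z : ℂ) : ℂ := (γ 1 0 : ℝ) * z + (γ 1 1 : ℝ)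

/-- `𝔎(γ, z) = c/(cz + d)` for `γ ∈ SL(2, ℝ)`. -/
def kK (γ : SL2R) (z : ℂ) : ℂ := (γ 1 0 : ℝ) / jJ γ z

/-- `γ z = (az+b)/(cz+d)` for `γ ∈ SL(2, ℝ)`. -/
def mact (γ : SL2R) (z : ℂ) : ℂ := ((γ 0 0 : ℝ) * z + (γ 0 1 : ℝ)) / jJ γ z

/-- The underlying real matrix of an element of `GL⁺(2, ℝ)`. -/
def gmat (α : GL2P) : Matrix (Fin 2) (Fin 2) ℝ :=
  ((α : Matrix.GeneralLinearGroup (Fin 2) ℝ) : Matrix (Fin 2) (Fin 2) ℝ)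

/-- The determinant of an element of `GL⁺(2, ℝ)`. -/
def gdet (α : GL2P) : ℝ := (gmat α).det

/-- `𝔍(α, z) = cz + d` for `α ∈ GL⁺(2, ℝ)`. -/
def gJ (α : GL2P) (z : ℂ) : ℂ := (gmat α 1 0 : ℝ) * z + (gmat α 1 1 : ℝ)

/-- `𝔎(α, z) = c/(cz + d)` for `α ∈ GL⁺(2, ℝ)`. -/
def gK (α : GL2P) (z : ℂ) : ℂ := (gmat α 1 0 : ℝ) / gJ α z

/-- `α z = (az+b)/(cz+d)` for `α ∈ GL⁺(2, ℝ)`. -/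
def gact (α : GL2P) (z : ℂ) : ℂ := ((gmat α 0 0 : ℝ) * z + (gmat α 0 1 : ℝ)) / gJ α z

/-- `(det α)^(μ/2)` for `α ∈ GL⁺(2, ℝ)` and `μ ∈ ℤ`. -/
def detpow (α : GL2P) (μ : ℤ) : ℂ := ((gdet α ^ ((μ : ℝ) / 2) : ℝ) : ℂ)

/-- The weight-`ξ` action `F ∥_ξ γ` of `SL(2,ℝ)` on polynomials over `𝓕`:
`(F ∥_ξ γ)(z, X) = 𝔍(γ,z)^(-ξ) F(γz, 𝔍(γ,z)^2 (X - 𝔎(γ,z)))`. -/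
def polyAct (ξ : ℤ) (F : ℂ → Polynomial ℂ) (γ : SL2R) : ℂ → Polynomial ℂ := fun z =>
  Polynomial.C (jJ γ z ^ (-ξ)) *
    (F (mact γ z)).comp (Polynomial.C (jJ γ z ^ 2) * (Polynomial.X - Polynomial.C (kK γ z)))

/-- The weight-`ξ` action `F ∥_ξ α` of `GL⁺(2,ℝ)` on polynomials over `𝓕`:
`(F ∥_ξ α)(z, X) = (det α)^(ξ/2) 𝔍(α,z)^(-ξ) F(αz, (det α)⁻¹ 𝔍(α,z)^2 (X - 𝔎(α,z)))`. -/
def polyActG (ξ : ℤ) (F : ℂ → Polynomial ℂ) (α : GL2P) : ℂ → Polynomial ℂ := fun z =>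
  Polynomial.C (detpow α ξ * gJ α z ^ (-ξ)) *
    (F (gact α z)).comp
      (Polynomial.C ((gdet α : ℂ)⁻¹ * gJ α z ^ 2) * (Polynomial.X - Polynomial.C (gK α z)))

/-- The weight-`l` action `Φ |^J_l γ` of `SL(2,ℝ)` on formal power series over `𝓕`:
`(Φ |^J_l γ)(z, X) = 𝔍(γ,z)^(-l) e^(-𝔎(γ,z) X) Φ(γz, 𝔍(γ,z)^(-2) X)`. -/
def psAct (l : ℤ) (Φ : ℂ → PowerSeries ℂ) (γ : SL2R) : ℂ → PowerSeries ℂ := fun z =>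
  PowerSeries.C (jJ γ z ^ (-l)) *
    (PowerSeries.mk fun n => (-(kK γ z)) ^ n / (n.factorial : ℂ)) *
    PowerSeries.rescale (jJ γ z ^ (-2 : ℤ)) (Φ (mact γ z))

/-- The weight-`l` action `Φ |^J_l α` of `GL⁺(2,ℝ)` on formal power series over `𝓕`:
`(Φ |^J_l α)(z, X) = (det α)^(l/2) 𝔍(α,z)^(-l) e^(-𝔎(α,z) X) Φ(αz, (det α) 𝔍(α,z)^(-2) X)`. -/
def psActG (l : ℤ) (Φ : ℂ → PowerSeries ℂ) (α : GL2P) : ℂ → PowerSeries ℂ := fun z =>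
  PowerSeries.C (detpow α l * gJ α z ^ (-l)) *
    (PowerSeries.mk fun n => (-(gK α z)) ^ n / (n.factorial : ℂ)) *
    PowerSeries.rescale ((gdet α : ℂ) * gJ α z ^ (-2 : ℤ)) (Φ (gact α z))

/-- The map `Π^δ_m`: for `Φ(z,X) = Σ_k φ_k(z) X^(k+δ)`,
`(Π^δ_m Φ)(z, X) = Σ_{r=0}^m (1/r!) φ_(m-r)(z) X^r`. -/
def PiDM (δ m : ℕ) (Φ : ℂ → PowerSeries ℂ) : ℂ → Polynomial ℂ := fun z =>
  ∑ r ∈ Finset.range (m + 1),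
    Polynomial.C ((PowerSeries.coeff (m - r + δ) (Φ z)) / (r.factorial : ℂ)) *
      Polynomial.X ^ r

/-- Membership in `𝓕_m[X]`: degree at most `m` and holomorphic coefficients. -/
def InFmX (m : ℕ) (F : ℂ → Polynomial ℂ) : Prop :=
  (∀ z : ℂ, (F z).degree ≤ (m : WithBot ℕ)) ∧ ∀ r : ℕ, Hol fun z => (F z).coeff r

/-- Membership in `𝓕[[X]]_δ = X^δ 𝓕[[X]]` with holomorphic coefficients. -/
def InFXd (δ : ℕ) (Φ : ℂ → PowerSeries ℂ) : Prop :=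
  (∀ z : ℂ, ∀ k < δ, PowerSeries.coeff k (Φ z) = 0) ∧
    ∀ k : ℕ, Hol fun z => PowerSeries.coeff k (Φ z)

/-- `QP^m_ξ(Γ)`: quasimodular polynomials of weight `ξ` and degree at most `m` for `Γ`. -/
def IsQP (Γ : Subgroup SL2R) (ξ : ℤ) (m : ℕ) (F : ℂ → Polynomial ℂ) : Prop :=
  InFmX m F ∧ ∀ γ ∈ Γ, ∀ z ∈ UHP, polyAct ξ F γ z = F z

/-- `J_l(Γ)_δ`: Jacobi-like forms of weight `l` for `Γ` lying in `𝓕[[X]]_δ`. -/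
def IsJF (Γ : Subgroup SL2R) (l : ℤ) (δ : ℕ) (Φ : ℂ → PowerSeries ℂ) : Prop :=
  InFXd δ Φ ∧ ∀ γ ∈ Γ, ∀ z ∈ UHP, psAct l Φ γ z = Φ z

/-- `M_μ(Γ)`: modular forms of weight `μ` for `Γ` (cusp conditions suppressed). -/
def IsModular (Γ : Subgroup SL2R) (μ : ℤ) (f : ℂ → ℂ) : Prop :=
  Hol f ∧ ∀ γ ∈ Γ, ∀ z ∈ UHP, jJ γ z ^ (-μ) * f (mact γ z) = f z

/-- `QM^m_ξ(Γ)`: quasimodular forms of weight `ξ` and depth at most `m` for `Γ`. -/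
def IsQM (Γ : Subgroup SL2R) (ξ : ℤ) (m : ℕ) (f : ℂ → ℂ) : Prop :=
  Hol f ∧ ∃ g : ℕ → ℂ → ℂ, (∀ r, Hol (g r)) ∧
    ∀ γ ∈ Γ, ∀ z ∈ UHP,
      jJ γ z ^ (-ξ) * f (mact γ z) = ∑ r ∈ Finset.range (m + 1), g r z * kK γ z ^ r

/-- The factorial `t!` of an integer `t` (equal to `(t.toNat)!`; intended for `t ≥ 0`). -/
def zfact (t : ℤ) : ℂ := (t.toNat.factorial : ℂ)

section Aux
open Finset

lemma uhp_open : IsOpen UHP := isOpen_lt continuous_const Complex.continuous_im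

lemma det_g (γ : SL2R) : (γ 0 0 : ℝ) * γ 1 1 - γ 0 1 * γ 1 0 = 1 := by
  have h := γ.2
  rw [Matrix.det_fin_two] at h
  simpa using h

lemma jJ_ne (γ : SL2R) {z : ℂ} (hz : z ∈ UHP) : jJ γ z ≠ 0 := by
  intro h
  have him : (γ 1 0 : ℝ) * z.im = 0 := by
    have := congrArg Complex.im h
    simpa [jJ, Complex.add_im, Complex.mul_im] using this
  have hz' : z.im ≠ 0 := ne_of_gt hz
  have hc : (γ 1 0 : ℝ) = 0 := by
    rcases mul_eq_zero.mp him with h1 | h1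
    · exact h1
    · exact absurd h1 hz'
  have hd : (γ 1 1 : ℝ) = 0 := by
    have := congrArg Complex.re h
    simpa [jJ, hc, Complex.add_re, Complex.mul_re] using this
  have := det_g γ
  rw [hc, hd] at this
  simp at this

lemma mact_mem (γ : SL2R) {z : ℂ} (hz : z ∈ UHP) : mact γ z ∈ UHP := by
  have hJ := jJ_ne γ hz
  have hsq : 0 < Complex.normSq (jJ γ z) := Complex.normSq_pos.mpr hJ
  have key : ((γ 0 0 : ℝ) * z + (γ 0 1 : ℝ)).im * (jJ γ z).re
      - ((γ 0 0 : ℝ) * z + (γ 0 1 : ℝ)).re * (jJ γ z).im = z.im := by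
    simp only [jJ, Complex.add_im, Complex.add_re, Complex.mul_im, Complex.mul_re,
      Complex.ofReal_re, Complex.ofReal_im]
    linear_combination z.im * det_g γ
  have him : (mact γ z).im = z.im / Complex.normSq (jJ γ z) := by
    rw [mact, Complex.div_im, div_sub_div_same, key]
  show 0 < (mact γ z).im
  rw [him]; exact div_pos hz hsq

end Aux
section Aux2

lemma hasDerivAt_jJ (γ : SL2R) (z : ℂ) : HasDerivAt (jJ γ) ((γ 1 0 : ℝ) : ℂ) z := by
  have := ((hasDerivAt_id z).const_mul ((γ 1 0 : ℝ) : ℂ)).add_const ((γ 1 1 : ℝ) : ℂ)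
  simp only [id, mul_one] at this; exact this

lemma hasDerivAt_num (γ : SL2R) (z : ℂ) :
    HasDerivAt (fun w => ((γ 0 0 : ℝ) : ℂ) * w + ((γ 0 1 : ℝ) : ℂ)) ((γ 0 0 : ℝ) : ℂ) z := by
  simpa using ((hasDerivAt_id z).const_mul ((γ 0 0 : ℝ) : ℂ)).add_const ((γ 0 1 : ℝ) : ℂ)

lemma hasDerivAt_mact (γ : SL2R) {z : ℂ} (hJ : jJ γ z ≠ 0) :
    HasDerivAt (mact γ) ((jJ γ z) ^ (-2 : ℤ)) z := by
  have h := (hasDerivAt_num γ z).div (hasDerivAt_jJ γ z) hJ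
  have : (((γ 0 0 : ℝ) : ℂ) * jJ γ z - (((γ 0 0 : ℝ) : ℂ) * z + ((γ 0 1 : ℝ) : ℂ)) *
      ((γ 1 0 : ℝ) : ℂ)) / (jJ γ z) ^ 2 = (jJ γ z) ^ (-2 : ℤ) := by
    have hd : ((γ 0 0 : ℝ) : ℂ) * jJ γ z - (((γ 0 0 : ℝ) : ℂ) * z + ((γ 0 1 : ℝ) : ℂ)) *
        ((γ 1 0 : ℝ) : ℂ) = 1 := by
      have := det_g γ
      have : ((γ 0 0 : ℝ) * γ 1 1 - γ 0 1 * γ 1 0 : ℝ) = (1 : ℝ) := this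
      have hc := congrArg (fun x : ℝ => (x : ℂ)) this
      push_cast at hc
      simp only [jJ]; ring_nf; ring_nf at hc; linear_combination hc
    rw [hd, one_div, zpow_neg]
    norm_num
  rw [this] at h
  exact h.congr_deriv rfl

lemma hasDerivAt_kK (γ : SL2R) {z : ℂ} (hJ : jJ γ z ≠ 0) :
    HasDerivAt (kK γ) (-(kK γ z) ^ 2) z := by
  have h := (hasDerivAt_const z ((γ 1 0 : ℝ) : ℂ)).div (hasDerivAt_jJ γ z) hJ
  have : (0 * jJ γ z - ((γ 1 0 : ℝ) : ℂ) * ((γ 1 0 : ℝ) : ℂ)) / (jJ γ z) ^ 2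
      = -(kK γ z) ^ 2 := by
    rw [kK]; field_simp; ring
  rw [this] at h
  exact h

lemma Hol.derivH {g : ℂ → ℂ} (hg : Hol g) : Hol (deriv g) :=
  ((hg.analyticOnNhd uhp_open).deriv).differentiableOn

lemma Hol.iter {g : ℂ → ℂ} (hg : Hol g) (t : ℕ) : Hol (deriv^[t] g) := by
  induction t with
  | zero => exact hg
  | succ t ih => rw [Function.iterate_succ_apply']; exact ih.derivH

lemma Hol.diffAt {g : ℂ → ℂ} (hg : Hol g) {z : ℂ} (hz : z ∈ UHP) :
    DifferentiableAt ℂ g z :=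
  hg.differentiableAt (uhp_open.mem_nhds hz)

end Aux2
section Comb

/-- `bN κ t s = C(t,s) * (κ+t-1)(κ+t-2)...(κ+s)` -/
def bN (κ t s : ℕ) : ℕ := t.choose s * (κ + t - 1).descFactorial (t - s)

def bC (κ t s : ℕ) : ℂ := (-1 : ℂ) ^ (t - s) * (bN κ t s : ℂ)

lemma bN_self (κ t : ℕ) : bN κ t t = 1 := by simp [bN]

lemma bC_self (κ t : ℕ) : bC κ t t = 1 := by simp [bC, bN_self]

lemma bN_gt (κ t s : ℕ) (h : t < s) : bN κ t s = 0 := by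
  simp [bN, Nat.choose_eq_zero_of_lt h]

lemma bN_rec (κ t s : ℕ) (hκ : 1 ≤ κ) (hst : s ≤ t) :
    bN κ (t+1) (s+1) = bN κ t s + (κ + t + s + 1) * bN κ t (s+1) := by
  obtain ⟨κ', rfl⟩ : ∃ κ', κ = κ' + 1 := ⟨κ - 1, by omega⟩
  rcases eq_or_lt_of_le hst with rfl | hlt
  · simp [bN, Nat.choose_succ_self]
  · obtain ⟨a, rfl⟩ : ∃ a, t = s + a + 1 := ⟨t - s - 1, by omega⟩
    have e1 : κ' + 1 + (s + a + 1 + 1) - 1 = (κ' + s + a + 1) + 1 := by omega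
    have e2 : κ' + 1 + (s + a + 1) - 1 = κ' + s + a + 1 := by omega
    have e3 : s + a + 1 + 1 - (s + 1) = a + 1 := by omega
    have e4 : s + a + 1 - s = a + 1 := by omega
    have e5 : s + a + 1 - (s + 1) = a := by omega
    rw [bN, bN, bN, e1, e2, e3, e4, e5, Nat.succ_descFactorial_succ,
      Nat.descFactorial_succ, Nat.choose_succ_succ' (s+a+1) s]
    have e6 : κ' + s + a + 1 - a = κ' + s + 1 := by omega
    rw [e6]
    have hpq : (s+a+1).choose (s+1) * (s+1) = (s+a+1).choose s * (s+a+1-s) :=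
      Nat.choose_succ_right_eq _ _
    rw [e4] at hpq
    set p := (s+a+1).choose s
    set q := (s+a+1).choose (s+1)
    set D := (κ' + s + a + 1).descFactorial a
    zify
    zify at hpq
    linear_combination (-(D : ℤ)) * hpq

lemma bN_zero (κ t : ℕ) (hκ : 1 ≤ κ) : bN κ (t+1) 0 = (κ + t) * bN κ t 0 := by
  obtain ⟨κ', rfl⟩ : ∃ κ', κ = κ' + 1 := ⟨κ - 1, by omega⟩
  have e1 : κ' + 1 + (t + 1) - 1 = (κ' + t) + 1 := by omega
  have e2 : κ' + 1 + t - 1 = κ' + t := by omega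
  have e0 : κ' + 1 + t = κ' + t + 1 := by omega
  rw [bN, bN, e1, e2, e0, Nat.choose_zero_right, Nat.choose_zero_right,
    Nat.sub_zero, Nat.sub_zero, one_mul, one_mul, Nat.succ_descFactorial_succ]

lemma bC_rec (κ t s : ℕ) (hκ : 1 ≤ κ) (hst : s ≤ t) :
    bC κ (t+1) (s+1) = bC κ t s - ((κ : ℂ) + t + s + 1) * bC κ t (s+1) := by
  rcases eq_or_lt_of_le hst with rfl | hlt
  · simp [bC, bN_self, bN_gt κ s (s+1) (by omega)]
  · obtain ⟨a, rfl⟩ : ∃ a, t = s + a + 1 := ⟨t - s - 1, by omega⟩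
    have e3 : s + a + 1 + 1 - (s + 1) = a + 1 := by omega
    have e4 : s + a + 1 - s = a + 1 := by omega
    have e5 : s + a + 1 - (s + 1) = a := by omega
    rw [bC, bC, bC, e3, e4, e5, bN_rec κ _ _ hκ hst]
    push_cast
    ring

lemma bC_zero (κ t : ℕ) (hκ : 1 ≤ κ) : bC κ (t+1) 0 = -((κ : ℂ) + t) * bC κ t 0 := by
  rw [bC, bC, bN_zero κ t hκ]
  simp only [Nat.sub_zero]
  push_cast
  ring

lemma bC_gt (κ t s : ℕ) (h : t < s) : bC κ t s = 0 := by
  simp [bC, bN_gt κ t s h]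

lemma sum_step (κ t : ℕ) (hκ : 1 ≤ κ) (u : ℕ → ℂ) :
    ∑ s ∈ Finset.range (t+1), bC κ t s * (u (s+1) - ((κ : ℂ) + t + s) * u s)
      = ∑ s ∈ Finset.range (t+2), bC κ (t+1) s * u s := by
  rw [Finset.sum_range_succ' (fun s => bC κ (t+1) s * u s) (t+1)]
  have step1 : ∀ s ∈ Finset.range (t+1),
      bC κ (t+1) (s+1) * u (s+1)
        = bC κ t s * u (s+1) - ((κ : ℂ) + t + s + 1) * bC κ t (s+1) * u (s+1) := by
    intro s hs
    rw [bC_rec κ t s hκ (by simpa using Nat.lt_succ_iff.mp (Finset.mem_range.mp hs))]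
    ring
  rw [Finset.sum_congr rfl step1]
  have lhs : ∑ s ∈ Finset.range (t+1), bC κ t s * (u (s+1) - ((κ : ℂ) + t + s) * u s)
      = (∑ s ∈ Finset.range (t+1), bC κ t s * u (s+1))
        - ∑ s ∈ Finset.range (t+1), ((κ : ℂ) + t + s) * bC κ t s * u s := by
    rw [← Finset.sum_sub_distrib]
    exact Finset.sum_congr rfl (fun s _ => by ring)
  rw [lhs, Finset.sum_sub_distrib]
  rw [Finset.sum_range_succ' (fun s => ((κ : ℂ) + t + s) * bC κ t s * u s) t]
  rw [Finset.sum_range_succ (fun s => ((κ : ℂ) + t + s + 1) * bC κ t (s+1) * u (s+1)) t]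
  rw [bC_gt κ t (t+1) (by omega), bC_zero κ t hκ]
  push_cast
  have hcg : ∀ x ∈ Finset.range t, ((κ:ℂ) + t + ((x:ℂ) + 1)) * bC κ t (x+1) * u (x+1)
      = ((κ:ℂ) + t + x + 1) * bC κ t (x+1) * u (x+1) := fun x _ => by ring
  rw [Finset.sum_congr rfl hcg]
  ring

lemma bN_fact (κ t s : ℕ) (hκ : 1 ≤ κ) (hst : s ≤ t) :
    bN κ t s * (s.factorial * (t-s).factorial * (κ+s-1).factorial)
      = t.factorial * (κ+t-1).factorial := by
  obtain ⟨κ', rfl⟩ : ∃ κ', κ = κ' + 1 := ⟨κ - 1, by omega⟩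
  have e2 : κ' + 1 + t - 1 = κ' + t := by omega
  have e3 : κ' + 1 + s - 1 = κ' + s := by omega
  rw [bN, e2, e3]
  have h1 : t.choose s * s.factorial * (t-s).factorial = t.factorial :=
    Nat.choose_mul_factorial_mul_factorial hst
  have h2 : (κ' + t).descFactorial (t - s) * (κ' + s).factorial = (κ' + t).factorial := by
    have hle : t - s ≤ κ' + t := by omega
    have := Nat.descFactorial_eq_factorial_mul_choose (κ' + t) (t - s)
    have h3 := Nat.choose_mul_factorial_mul_factorial hle
    have e : κ' + t - (t - s) = κ' + s := by omega
    rw [e] at h3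
    calc (κ' + t).descFactorial (t - s) * (κ' + s).factorial
        = (t-s).factorial * ((κ'+t).choose (t-s)) * (κ'+s).factorial := by rw [this]
      _ = (κ'+t).choose (t-s) * (t-s).factorial * (κ'+s).factorial := by ring
      _ = (κ' + t).factorial := h3
  calc t.choose s * (κ'+t).descFactorial (t-s) * (s.factorial * (t-s).factorial * (κ'+s).factorial)
      = (t.choose s * s.factorial * (t-s).factorial) * ((κ'+t).descFactorial (t-s) * (κ'+s).factorial) := by ring
    _ = t.factorial * (κ'+t).factorial := by rw [h1, h2]

end Comb
section CK

def ckTerm (γ : SL2R) (κ : ℕ) (h : ℂ → ℂ) (t s : ℕ) : ℂ → ℂ := fun w =>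
  bC κ t s * ((kK γ w) ^ (t - s) *
    ((jJ γ w) ^ (-((κ:ℤ) + 2*s)) * (deriv^[s] h) (mact γ w)))

def ckU (γ : SL2R) (κ : ℕ) (h : ℂ → ℂ) (t : ℕ) (z : ℂ) : ℕ → ℂ := fun s =>
  (kK γ z) ^ (t + 1 - s) * ((jJ γ z) ^ (-((κ:ℤ) + 2*s)) * (deriv^[s] h) (mact γ z))

lemma ckTerm_hasDeriv (γ : SL2R) (κ : ℕ) (h : ℂ → ℂ) (hh : Hol h) (t s : ℕ) (hst : s ≤ t)
    {z : ℂ} (hz : z ∈ UHP) :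
    HasDerivAt (ckTerm γ κ h t s)
      (bC κ t s * (ckU γ κ h t z (s+1) - ((κ:ℂ) + t + s) * ckU γ κ h t z s)) z := by
  have hJ := jJ_ne γ hz
  have hc : ((γ 1 0 : ℝ) : ℂ) = kK γ z * jJ γ z := by
    rw [kK]; field_simp
  have hiter : deriv (deriv^[s] h) (mact γ z) = (deriv^[s+1] h) (mact γ z) := by
    rw [Function.iterate_succ_apply']
  have hK' : HasDerivAt (fun w => kK γ w ^ (t - s))
      (-((t:ℂ) - s) * kK γ z ^ (t - s + 1)) z := by
    refine ((hasDerivAt_kK γ hJ).fun_pow (t - s)).congr_deriv ?_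
    rcases Nat.eq_or_lt_of_le hst with rfl | hlt
    · simp
    · obtain ⟨a, rfl⟩ : ∃ a, t = s + a + 1 := ⟨t - s - 1, by omega⟩
      have h4 : s + a + 1 - s = a + 1 := by omega
      rw [h4]
      simp only [Nat.add_sub_cancel]
      push_cast
      ring
  have hJp : HasDerivAt (fun w => jJ γ w ^ (-((κ:ℤ) + 2*s)))
      (-((κ:ℂ) + 2*s) * (kK γ z * jJ γ z ^ (-((κ:ℤ) + 2*s)))) z := by
    have base : HasDerivAt (fun w => jJ γ w ^ (-((κ:ℤ) + 2*s)))
        (((-((κ:ℤ) + 2*s) : ℤ) : ℂ) * jJ γ z ^ (-((κ:ℤ) + 2*s) - 1) * ((γ 1 0 : ℝ) : ℂ)) z :=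
      HasDerivAt.comp z (hasDerivAt_zpow _ _ (Or.inl hJ)) (hasDerivAt_jJ γ z)
    convert base using 1
    rw [hc, zpow_sub_one₀ hJ]
    push_cast
    field_simp
  have hWd : HasDerivAt (fun w => (deriv^[s] h) (mact γ w))
      ((deriv^[s+1] h) (mact γ z) * (jJ γ z) ^ (-2 : ℤ)) z := by
    rw [← hiter]
    exact (((hh.iter s).diffAt (mact_mem γ hz)).hasDerivAt).comp z (hasDerivAt_mact γ hJ)
  have hprod := ((hK'.fun_mul (hJp.fun_mul hWd)).const_mul (bC κ t s))
  refine hprod.congr_deriv ?_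
  have eSplit : (jJ γ z) ^ (-((κ:ℤ) + 2*((s+1 : ℕ) : ℤ)))
      = (jJ γ z) ^ (-((κ:ℤ) + 2*s)) * (jJ γ z) ^ (-2 : ℤ) := by
    rw [← zpow_add₀ hJ]
    congr 1
    push_cast
    ring
  have e4 : kK γ z ^ (t + 1 - (s+1)) = kK γ z ^ (t - s) := by congr 1; omega
  have e5 : kK γ z ^ (t + 1 - s) = kK γ z ^ (t - s + 1) := by congr 1; omega
  rw [ckU, ckU, eSplit, e4, e5]
  ring
end CK

lemma CK_expand (γ : SL2R) (κ : ℕ) (hκ : 1 ≤ κ) (h : ℂ → ℂ) (hh : Hol h)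
    (hmod : ∀ z ∈ UHP, (jJ γ z) ^ (-(κ:ℤ)) * h (mact γ z) = h z) :
    ∀ t, ∀ z ∈ UHP, deriv^[t] h z = ∑ s ∈ Finset.range (t+1), ckTerm γ κ h t s z := by
  intro t
  induction t with
  | zero =>
    intro z hz
    rw [Function.iterate_zero_apply, ← hmod z hz, Finset.sum_range_one, ckTerm, bC_self]
    norm_num
  | succ t IH =>
    intro z hz
    have hR : HasDerivAt (fun w => ∑ s ∈ Finset.range (t+1), ckTerm γ κ h t s w)
        (∑ s ∈ Finset.range (t+1),
          bC κ t s * (ckU γ κ h t z (s+1) - ((κ:ℂ)+t+s) * ckU γ κ h t z s)) z :=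
      HasDerivAt.fun_sum fun s hs =>
        ckTerm_hasDeriv γ κ h hh t s (Nat.lt_succ_iff.mp (Finset.mem_range.mp hs)) hz
    have heq : deriv^[t+1] h z
        = deriv (fun w => ∑ s ∈ Finset.range (t+1), ckTerm γ κ h t s w) z := by
      rw [Function.iterate_succ_apply']
      apply Filter.EventuallyEq.deriv_eq
      filter_upwards [uhp_open.mem_nhds hz] with w hw
      exact IH w hw
    rw [heq, hR.deriv, sum_step κ t hκ (ckU γ κ h t z)]
    exact Finset.sum_congr rfl fun s hs => rfl
section Lift

/-- Cohen–Kuznetsov denominators. -/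
def ccJ (n j t : ℕ) : ℂ :=
  ((n + 2*j - 1).factorial : ℂ) / ((t.factorial : ℂ) * ((n + 2*j + t - 1).factorial : ℂ))

lemma factC_ne (a : ℕ) : ((a.factorial : ℂ)) ≠ 0 :=
  Nat.cast_ne_zero.mpr (Nat.factorial_ne_zero a)

lemma ccJ_zero (n j : ℕ) : ccJ n j 0 = 1 := by
  rw [ccJ]
  rw [Nat.factorial_zero, Nat.add_zero]
  rw [Nat.cast_one, one_mul, div_self (factC_ne _)]

lemma ck_cc (n j t s : ℕ) (hn : 1 ≤ n) (hst : s ≤ t) :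
    ccJ n j t * bC (n + 2*j) t s
      = (-1 : ℂ)^(t-s) * ccJ n j s / (((t-s).factorial : ℂ)) := by
  have hb := bN_fact (n + 2*j) t s (by omega) hst
  have hbC : ((bN (n + 2*j) t s : ℕ) : ℂ) * ((s.factorial : ℂ) * ((t-s).factorial : ℂ)
      * (((n + 2*j) + s - 1).factorial : ℂ))
      = (t.factorial : ℂ) * (((n + 2*j) + t - 1).factorial : ℂ) := by
    exact_mod_cast congrArg (fun x : ℕ => (x : ℂ)) hb
  rw [ccJ, ccJ, bC]
  have e1 : n + 2*j + t - 1 = (n + 2*j) + t - 1 := rfl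
  have e2 : n + 2*j + s - 1 = (n + 2*j) + s - 1 := rfl
  rw [e1, e2]
  have h1 := factC_ne t
  have h2 := factC_ne s
  have h3 := factC_ne (t-s)
  have h4 := factC_ne ((n+2*j) + t - 1)
  have h5 := factC_ne ((n+2*j) + s - 1)
  field_simp
  linear_combination ((n+2*j-1).factorial : ℂ) * hbC

/-- The recursively defined candidate modular coefficients. -/
def hSeq (n : ℕ) (φ : ℕ → ℂ → ℂ) (k : ℕ) : ℂ → ℂ := fun z =>
  φ k z - ∑ j ∈ (Finset.range k).attach,
    ccJ n j.1 (k - j.1) * deriv^[k - j.1] (hSeq n φ j.1) z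
termination_by k
decreasing_by exact Finset.mem_range.mp j.2

lemma hSeq_eq (n : ℕ) (φ : ℕ → ℂ → ℂ) (k : ℕ) (z : ℂ) :
    hSeq n φ k z = φ k z
      - ∑ j ∈ Finset.range k, ccJ n j (k - j) * deriv^[k - j] (hSeq n φ j) z := by
  rw [hSeq]
  congr 1
  exact Finset.sum_attach (Finset.range k) (fun j => ccJ n j (k - j) * deriv^[k - j] (hSeq n φ j) z)

end Lift
section Expand

lemma uExpand (γ : SL2R) (n j : ℕ) (hn : 1 ≤ n) (Hj : ℂ → ℂ) (hhol : Hol Hj)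
    (hmod : ∀ z ∈ UHP, (jJ γ z) ^ (-(((n + 2*j : ℕ)):ℤ)) * Hj (mact γ z) = Hj z) :
    ∀ k, ∀ z ∈ UHP,
      (if j ≤ k then ccJ n j (k-j) * deriv^[k-j] Hj z else 0)
        = ∑ i ∈ Finset.range (k+1),
            (-(kK γ z))^(k-i) / (((k-i).factorial : ℂ))
              * (jJ γ z)^(-((n:ℤ) + 2*i))
              * (if j ≤ i then ccJ n j (i-j) * deriv^[i-j] Hj (mact γ z) else 0) := by
  intro k z hz
  by_cases hjk : j ≤ k
  · rw [if_pos hjk]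
    have hck := CK_expand γ (n+2*j) (by omega) Hj hhol hmod (k - j) z hz
    rw [Finset.range_eq_Ico,
      ← Finset.sum_Ico_consecutive _ (Nat.zero_le j) (by omega : j ≤ k+1)]
    have hfirst : (∑ i ∈ Finset.Ico 0 j,
        (-(kK γ z))^(k-i) / (((k-i).factorial : ℂ)) * (jJ γ z)^(-((n:ℤ) + 2*i))
          * (if j ≤ i then ccJ n j (i-j) * deriv^[i-j] Hj (mact γ z) else 0)) = 0 := by
      apply Finset.sum_eq_zero
      intro i hi
      have hij : i < j := (Finset.mem_Ico.mp hi).2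
      rw [if_neg (by omega), mul_zero]
    rw [hfirst, zero_add, Finset.sum_Ico_eq_sum_range]
    have hrg : k + 1 - j = (k - j) + 1 := by omega
    rw [hrg, hck, Finset.mul_sum]
    apply Finset.sum_congr rfl
    intro s hs
    have hs' : s ≤ k - j := by
      have := Finset.mem_range.mp hs; omega
    rw [ckTerm, if_pos (by omega : j ≤ j + s)]
    have e1 : j + s - j = s := by omega
    have e2 : k - (j+s) = (k-j) - s := by omega
    have e3 : (jJ γ z) ^ (-((n:ℤ) + 2*((j+s : ℕ):ℤ)))
        = (jJ γ z) ^ (-(((n+2*j : ℕ)):ℤ) + -(2*(s:ℤ))) := by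
      congr 1; push_cast; ring
    rw [e1, e2, e3, neg_pow (kK γ z) ((k-j)-s)]
    have hmain := ck_cc n j (k-j) s hn hs'
    have e5 : (jJ γ z) ^ (-(((n + 2*j : ℕ)):ℤ) + -(2*(s:ℤ)))
        = (jJ γ z) ^ (-(((n + 2*j : ℕ):ℤ) + 2*(s:ℤ))) := by congr 1; ring
    rw [e5]
    linear_combination (kK γ z ^ ((k-j)-s) *
      (jJ γ z ^ (-(((n + 2*j : ℕ):ℤ) + 2*(s:ℤ))) * deriv^[s] Hj (mact γ z))) * hmain
  · rw [if_neg hjk]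
    symm
    apply Finset.sum_eq_zero
    intro i hi
    have : i < k + 1 := Finset.mem_range.mp hi
    rw [if_neg (by omega), mul_zero]

end Expand
section QM

lemma QM_coeff (ξ : ℤ) (m : ℕ) (F : ℂ → Polynomial ℂ)
    (hdeg : ∀ z : ℂ, (F z).degree ≤ (m : WithBot ℕ))
    (γ : SL2R) {z : ℂ} (htr : polyAct ξ F γ z = F z) (r : ℕ) :
    (F z).coeff r = (jJ γ z)^(-ξ) * ∑ s ∈ Finset.range (m+1),
      (F (mact γ z)).coeff s
        * ((s.choose r : ℂ) * ((jJ γ z)^2)^s * (-(kK γ z))^(s-r)) := by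
  conv_lhs => rw [← htr]
  rw [polyAct, Polynomial.coeff_C_mul]
  congr 1
  have hnd : (F (mact γ z)).natDegree < m + 1 :=
    Nat.lt_succ_of_le (Polynomial.natDegree_le_iff_degree_le.mpr (hdeg (mact γ z)))
  conv_lhs => rw [Polynomial.as_sum_range' (F (mact γ z)) (m+1) hnd]
  rw [Polynomial.sum_comp, Polynomial.finset_sum_coeff]
  apply Finset.sum_congr rfl
  intro s hs
  rw [Polynomial.monomial_comp]
  have hq : Polynomial.C (jJ γ z ^ 2) * (Polynomial.X - Polynomial.C (kK γ z))
      = Polynomial.C (jJ γ z ^ 2) * (Polynomial.X + Polynomial.C (-(kK γ z))) := by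
    rw [Polynomial.C_neg]; ring
  rw [hq, mul_pow, ← Polynomial.C_pow, Polynomial.coeff_C_mul, Polynomial.coeff_C_mul,
    Polynomial.coeff_X_add_C_pow]
  ring

end QM
section PhiJL

lemma phi_jl (ξ : ℤ) (n m : ℕ) (hnz : (n:ℤ) = ξ - 2*m)
    (F : ℂ → Polynomial ℂ) (hdeg : ∀ z : ℂ, (F z).degree ≤ (m : WithBot ℕ))
    (γ : SL2R) {z : ℂ} (hz : z ∈ UHP) (htr : polyAct ξ F γ z = F z)
    (k : ℕ) (hkm : k ≤ m) :
    ((m-k).factorial : ℂ) * (F z).coeff (m-k)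
      = ∑ i ∈ Finset.range (k+1),
          (-(kK γ z))^(k-i) / ((k-i).factorial : ℂ)
            * (jJ γ z)^(-((n:ℤ) + 2*i))
            * (((m-i).factorial : ℂ) * (F (mact γ z)).coeff (m-i)) := by
  have hJ := jJ_ne γ hz
  have hqm := QM_coeff ξ m F hdeg γ htr (m-k)
  -- reflect the sum
  rw [← Finset.sum_range_reflect] at hqm
  -- kill the terms with index > k
  have hsub : Finset.range (k+1) ⊆ Finset.range (m+1) := by
    apply Finset.range_subset_range.mpr; omega
  have hvan : ∀ j ∈ Finset.range (m+1), j ∉ Finset.range (k+1) →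
      (F (mact γ z)).coeff (m + 1 - 1 - j)
        * (((m + 1 - 1 - j).choose (m-k) : ℂ) * ((jJ γ z)^2)^(m + 1 - 1 - j)
            * (-(kK γ z))^((m + 1 - 1 - j)-(m-k))) = 0 := by
    intro j hj hj'
    have hj1 : j ≤ m := by have := Finset.mem_range.mp hj; omega
    have hj2 : k < j := by
      by_contra hc
      exact hj' (Finset.mem_range.mpr (by omega))
    have : m + 1 - 1 - j < m - k := by omega
    rw [Nat.choose_eq_zero_of_lt this]
    simp
  rw [← Finset.sum_subset hsub hvan] at hqm
  rw [hqm, Finset.mul_sum, Finset.mul_sum]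
  apply Finset.sum_congr rfl
  intro j hj
  have hjk : j ≤ k := by have := Finset.mem_range.mp hj; omega
  have hm1 : m + 1 - 1 - j = m - j := by omega
  rw [hm1]
  -- facts
  have efacN : (m-j).choose (m-k) * (m-k).factorial * (k-j).factorial = (m-j).factorial := by
    have h0 := Nat.choose_mul_factorial_mul_factorial (show m-k ≤ m-j by omega)
    have e : (m-j) - (m-k) = k - j := by omega
    rwa [e] at h0
  have efacC : ((m-j).choose (m-k) : ℂ) * ((m-k).factorial : ℂ) * ((k-j).factorial : ℂ)
      = ((m-j).factorial : ℂ) := by exact_mod_cast congrArg (fun x : ℕ => (x : ℂ)) efacN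
  have epow : (-(kK γ z))^((m-j)-(m-k)) = (-(kK γ z))^(k-j) := by congr 1; omega
  have eJ : (jJ γ z)^(-ξ) * ((jJ γ z)^2)^(m-j) = (jJ γ z)^(-((n:ℤ) + 2*j)) := by
    rw [← pow_mul, ← zpow_natCast (jJ γ z) (2*(m-j)), ← zpow_add₀ hJ]
    congr 1
    have : ((2*(m-j) : ℕ) : ℤ) = 2*((m:ℤ) - j) := by
      push_cast [Nat.cast_sub (show j ≤ m by omega)]
      ring
    rw [this]
    omega
  rw [epow]
  have hfne := factC_ne (k-j)
  rw [div_mul_eq_mul_div, div_mul_eq_mul_div, eq_div_iff hfne]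
  linear_combination ((F (mact γ z)).coeff (m-j) * (-(kK γ z))^(k-j)
      * ((m-k).factorial : ℂ) * ((m-j).choose (m-k) : ℂ) * ((k-j).factorial : ℂ)) * eJ
    + ((F (mact γ z)).coeff (m-j) * (-(kK γ z))^(k-j) * (jJ γ z)^(-((n:ℤ) + 2*j))) * efacC

end PhiJL
section Main

def phiF (m : ℕ) (F : ℂ → Polynomial ℂ) : ℕ → ℂ → ℂ :=
  fun k z => (((m-k).factorial : ℂ)) * (F z).coeff (m-k)

def HH (n m : ℕ) (F : ℂ → Polynomial ℂ) : ℕ → ℂ → ℂ := hSeq n (phiF m F)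

def uu (n m : ℕ) (F : ℂ → Polynomial ℂ) (j k : ℕ) : ℂ → ℂ := fun z =>
  if j ≤ k then ccJ n j (k-j) * deriv^[k-j] (HH n m F j) z else 0

def psiF (n m : ℕ) (F : ℂ → Polynomial ℂ) (k : ℕ) : ℂ → ℂ := fun z =>
  ∑ j ∈ Finset.range (m+1), uu n m F j k z

variable {n m : ℕ} {F : ℂ → Polynomial ℂ}

lemma HH_hol (hhol : ∀ r : ℕ, Hol fun z => (F z).coeff r) (k : ℕ) : Hol (HH n m F k) := by
  induction k using Nat.strong_induction_on with
  | _ k ih =>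
    have he : HH n m F k = fun z => phiF m F k z
        - ∑ j ∈ Finset.range k, ccJ n j (k-j) * deriv^[k-j] (HH n m F j) z := by
      funext z; exact hSeq_eq n (phiF m F) k z
    rw [he]
    exact ((hhol (m-k)).const_mul _).sub (DifferentiableOn.fun_sum fun j hj =>
      ((ih j (Finset.mem_range.mp hj)).iter (k-j)).const_mul _)

lemma uu_hol (hhol : ∀ r : ℕ, Hol fun z => (F z).coeff r) (j k : ℕ) : Hol (uu n m F j k) := by
  by_cases hc : j ≤ k
  · have : uu n m F j k = fun z => ccJ n j (k-j) * deriv^[k-j] (HH n m F j) z := by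
      funext z; simp [uu, hc]
    rw [this]; exact ((HH_hol hhol j).iter (k-j)).const_mul _
  · have : uu n m F j k = fun _ => 0 := by funext z; simp [uu, hc]
    rw [this]; exact differentiableOn_const 0

lemma psiF_hol (hhol : ∀ r : ℕ, Hol fun z => (F z).coeff r) (k : ℕ) : Hol (psiF n m F k) :=
  DifferentiableOn.fun_sum fun j _ => uu_hol hhol j k

lemma uu_part (K k : ℕ) (hkK : k < K) (z : ℂ) :
    (∑ j ∈ Finset.range K, uu n m F j k z) = phiF m F k z := by
  have hvan : ∀ j ∈ Finset.range K, j ∉ Finset.range (k+1) → uu n m F j k z = 0 := by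
    intro j _ hj'
    have : ¬ j ≤ k := fun hc => hj' (Finset.mem_range.mpr (by omega))
    simp [uu, this]
  rw [← Finset.sum_subset (Finset.range_subset_range.mpr hkK : Finset.range (k+1) ⊆ Finset.range K)
    hvan]
  rw [Finset.sum_range_succ]
  have hlast : uu n m F k k z = HH n m F k z := by simp [uu, ccJ_zero]
  have hrest : ∀ j ∈ Finset.range k, uu n m F j k z
      = ccJ n j (k-j) * deriv^[k-j] (HH n m F j) z := by
    intro j hj
    have : j ≤ k := le_of_lt (Finset.mem_range.mp hj)
    simp [uu, this]
  rw [Finset.sum_congr rfl hrest, hlast]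
  rw [show HH n m F k z = _ from hSeq_eq n (phiF m F) k z]
  simp only [HH]
  ring

end Main
section Mod

variable {Γ : Subgroup SL2R} {ξ : ℤ} {n m : ℕ} {F : ℂ → Polynomial ℂ}

lemma HH_mod (hn1 : 1 ≤ n) (hnz : (n:ℤ) = ξ - 2*(m:ℤ))
    (hdeg : ∀ z : ℂ, (F z).degree ≤ (m : WithBot ℕ))
    (hhol : ∀ r : ℕ, Hol fun z => (F z).coeff r)
    (htrans : ∀ γ ∈ Γ, ∀ z ∈ UHP, polyAct ξ F γ z = F z) :
    ∀ k, k ≤ m → ∀ γ ∈ Γ, ∀ z ∈ UHP,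
      (jJ γ z) ^ (-(((n + 2*k : ℕ)):ℤ)) * HH n m F k (mact γ z) = HH n m F k z := by
  intro k
  induction k using Nat.strong_induction_on with
  | _ k ih =>
    intro hkm γ hγ z hz
    have hgz := mact_mem γ hz
    -- expansion of the partial sums over j < k
    have hexp : (∑ j ∈ Finset.range k, uu n m F j k z)
        = ∑ i ∈ Finset.range (k+1), (-(kK γ z))^(k-i) / ((k-i).factorial : ℂ)
            * (jJ γ z)^(-((n:ℤ) + 2*i)) * (∑ j ∈ Finset.range k, uu n m F j i (mact γ z)) := by
      have h1 : ∀ j ∈ Finset.range k, uu n m F j k z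
          = ∑ i ∈ Finset.range (k+1), (-(kK γ z))^(k-i) / ((k-i).factorial : ℂ)
              * (jJ γ z)^(-((n:ℤ) + 2*i)) * uu n m F j i (mact γ z) := by
        intro j hj
        have hjk : j < k := Finset.mem_range.mp hj
        exact uExpand γ n j hn1 (HH n m F j) (HH_hol hhol j)
          (fun w hw => ih j hjk (by omega) γ hγ w hw) k z hz
      rw [Finset.sum_congr rfl h1, Finset.sum_comm]
      exact Finset.sum_congr rfl fun i _ => (Finset.mul_sum _ _ _).symm
    have hφjl := phi_jl ξ n m hnz F hdeg γ hz (htrans γ hγ z hz) k hkm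
    have hψ'k : ∀ w : ℂ, (∑ j ∈ Finset.range k, uu n m F j k w)
        = phiF m F k w - HH n m F k w := by
      intro w
      have h0 := uu_part (n := n) (m := m) (F := F) (k+1) k (by omega) w
      rw [Finset.sum_range_succ] at h0
      have hlast : uu n m F k k w = HH n m F k w := by simp [uu, ccJ_zero]
      rw [hlast] at h0
      linear_combination h0
    -- subtract
    have hsum : ∑ i ∈ Finset.range (k+1), (-(kK γ z))^(k-i) / ((k-i).factorial : ℂ)
          * (jJ γ z)^(-((n:ℤ) + 2*i))
          * (phiF m F i (mact γ z) - (∑ j ∈ Finset.range k, uu n m F j i (mact γ z)))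
        = (jJ γ z)^(-((n:ℤ) + 2*k)) * HH n m F k (mact γ z) := by
      rw [Finset.sum_range_succ]
      have hzero : ∀ i ∈ Finset.range k,
          (-(kK γ z))^(k-i) / ((k-i).factorial : ℂ) * (jJ γ z)^(-((n:ℤ) + 2*i))
            * (phiF m F i (mact γ z) - (∑ j ∈ Finset.range k, uu n m F j i (mact γ z))) = 0 := by
        intro i hi
        rw [uu_part k i (Finset.mem_range.mp hi) (mact γ z)]
        ring
      rw [Finset.sum_eq_zero hzero, zero_add, hψ'k (mact γ z)]
      simp
    have ecast : (jJ γ z)^(-(((n + 2*k : ℕ)):ℤ)) = (jJ γ z)^(-((n:ℤ) + 2*k)) := by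
      congr 1
    rw [ecast, ← hsum]
    have hrw : ∀ i ∈ Finset.range (k+1),
        (-(kK γ z))^(k-i) / ((k-i).factorial : ℂ) * (jJ γ z)^(-((n:ℤ) + 2*i))
          * (phiF m F i (mact γ z) - (∑ j ∈ Finset.range k, uu n m F j i (mact γ z)))
        = (-(kK γ z))^(k-i) / ((k-i).factorial : ℂ) * (jJ γ z)^(-((n:ℤ) + 2*i))
            * phiF m F i (mact γ z)
          - (-(kK γ z))^(k-i) / ((k-i).factorial : ℂ) * (jJ γ z)^(-((n:ℤ) + 2*i))
            * (∑ j ∈ Finset.range k, uu n m F j i (mact γ z)) := fun i _ => by ring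
    rw [Finset.sum_congr rfl hrw, Finset.sum_sub_distrib, ← hexp]
    simp only [phiF]
    rw [← hφjl, hψ'k z]
    simp only [phiF]
    ring

end Mod
section Psi

variable {Γ : Subgroup SL2R} {ξ : ℤ} {n m : ℕ} {F : ℂ → Polynomial ℂ}

lemma psiF_jl (hn1 : 1 ≤ n) (hnz : (n:ℤ) = ξ - 2*(m:ℤ))
    (hdeg : ∀ z : ℂ, (F z).degree ≤ (m : WithBot ℕ))
    (hhol : ∀ r : ℕ, Hol fun z => (F z).coeff r)
    (htrans : ∀ γ ∈ Γ, ∀ z ∈ UHP, polyAct ξ F γ z = F z) :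
    ∀ γ ∈ Γ, ∀ z ∈ UHP, ∀ k,
      psiF n m F k z = ∑ i ∈ Finset.range (k+1),
        (-(kK γ z))^(k-i) / ((k-i).factorial : ℂ)
          * (jJ γ z)^(-((n:ℤ) + 2*i)) * psiF n m F i (mact γ z) := by
  intro γ hγ z hz k
  have h1 : ∀ j ∈ Finset.range (m+1), uu n m F j k z
      = ∑ i ∈ Finset.range (k+1), (-(kK γ z))^(k-i) / ((k-i).factorial : ℂ)
          * (jJ γ z)^(-((n:ℤ) + 2*i)) * uu n m F j i (mact γ z) := by
    intro j hj
    have hjm : j ≤ m := by have := Finset.mem_range.mp hj; omega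
    exact uExpand γ n j hn1 (HH n m F j) (HH_hol hhol j)
      (fun w hw => HH_mod hn1 hnz hdeg hhol htrans j hjm γ hγ w hw) k z hz
  rw [psiF, Finset.sum_congr rfl h1, Finset.sum_comm]
  exact Finset.sum_congr rfl fun i _ => (Finset.mul_sum _ _ _).symm

end Psi
-- STATEMENT 15
theorem stmt15 (Γ : Subgroup SL2R) (hΓ : DiscreteTopology Γ) (m : ℕ) (hm : 0 < m)
    (ξ : ℤ) (hξ : 2 * (m : ℤ) < ξ) (δ : ℕ)
    (F : ℂ → Polynomial ℂ) (hF : IsQP Γ ξ m F) :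
    ∃ Φ : ℂ → PowerSeries ℂ,
      IsJF Γ (ξ - 2 * (m : ℤ) - 2 * (δ : ℤ)) δ Φ ∧ ∀ z ∈ UHP, PiDM δ m Φ z = F z := by
  classical
  obtain ⟨⟨hdeg, hhol⟩, htrans⟩ := hF
  set n : ℕ := (ξ - 2*(m:ℤ)).toNat with hndef
  have hnz : (n:ℤ) = ξ - 2*(m:ℤ) := Int.toNat_of_nonneg (by omega)
  have hn1 : 1 ≤ n := by
    have h1 : (1:ℤ) ≤ (n:ℤ) := by rw [hnz]; omega
    exact_mod_cast h1
  refine ⟨fun z => PowerSeries.mk fun i => if δ ≤ i then psiF n m F (i-δ) z else 0,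
    ⟨⟨?_, ?_⟩, ?_⟩, ?_⟩
  · -- vanishing below δ
    intro z k hk
    rw [PowerSeries.coeff_mk, if_neg (by omega)]
  · -- holomorphy of coefficients
    intro k
    by_cases hc : δ ≤ k
    · simp only [PowerSeries.coeff_mk, if_pos hc]
      exact psiF_hol hhol _
    · simp only [PowerSeries.coeff_mk, if_neg hc]
      exact differentiableOn_const 0
  · -- transformation law
    intro γ hγ z hz
    have hJ := jJ_ne γ hz
    apply PowerSeries.ext
    intro N
    simp only [psAct]
    rw [mul_assoc, PowerSeries.coeff_C_mul, PowerSeries.coeff_mul,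
      Finset.Nat.sum_antidiagonal_eq_sum_range_succ_mk]
    simp only [PowerSeries.coeff_mk, PowerSeries.coeff_rescale]
    rw [Finset.mul_sum]
    by_cases hN : δ ≤ N
    · rw [if_pos hN]
      set k := N - δ with hk
      have hsub : Finset.range (k+1) ⊆ Finset.range (N+1) :=
        Finset.range_subset_range.mpr (by omega)
      have hvan : ∀ p ∈ Finset.range (N+1), p ∉ Finset.range (k+1) →
          jJ γ z ^ (-(ξ - 2 * (m:ℤ) - 2 * (δ:ℤ)))
            * ((-kK γ z) ^ p / (p.factorial : ℂ)
              * ((jJ γ z ^ (-2:ℤ)) ^ (N - p)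
                * (if δ ≤ N - p then psiF n m F (N - p - δ) (mact γ z) else 0))) = 0 := by
        intro p hp hp'
        have hp2 : p < N + 1 := Finset.mem_range.mp hp
        have h1 : k < p := by
          by_contra hcon
          exact hp' (Finset.mem_range.mpr (by omega))
        rw [if_neg (show ¬ δ ≤ N - p by omega)]
        ring
      rw [← Finset.sum_subset hsub hvan, ← Finset.sum_range_reflect]
      rw [psiF_jl hn1 hnz hdeg hhol htrans γ hγ z hz k]
      apply Finset.sum_congr rfl
      intro i hi
      have hik : i ≤ k := by have := Finset.mem_range.mp hi; omega
      have e0 : k + 1 - 1 - i = k - i := by omega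
      rw [e0, if_pos (by omega : δ ≤ N - (k - i))]
      have e1 : N - (k - i) - δ = i := by omega
      rw [e1]
      have e2 : jJ γ z ^ (-(ξ - 2 * (m:ℤ) - 2 * (δ:ℤ))) * (jJ γ z ^ (-2:ℤ)) ^ (N - (k - i))
          = jJ γ z ^ (-((n:ℤ) + 2*i)) := by
        rw [← zpow_natCast (jJ γ z ^ (-2:ℤ)) (N - (k - i)), ← zpow_mul, ← zpow_add₀ hJ]
        congr 1
        have e3 : (N : ℤ) - (k - i) = (δ:ℤ) + i := by omega
        rw [show ((N - (k - i) : ℕ) : ℤ) = (N:ℤ) - ((k:ℤ) - (i:ℤ)) from by omega, ]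
        omega
      calc jJ γ z ^ (-(ξ - 2 * (m:ℤ) - 2 * (δ:ℤ)))
            * ((-kK γ z) ^ (k-i) / ((k-i).factorial : ℂ)
              * ((jJ γ z ^ (-2:ℤ)) ^ (N - (k - i)) * psiF n m F i (mact γ z)))
          = (jJ γ z ^ (-(ξ - 2 * (m:ℤ) - 2 * (δ:ℤ))) * (jJ γ z ^ (-2:ℤ)) ^ (N - (k - i)))
            * ((-kK γ z) ^ (k-i) / ((k-i).factorial : ℂ) * psiF n m F i (mact γ z)) := by
            ring
        _ = (-kK γ z) ^ (k-i) / ((k-i).factorial : ℂ) * jJ γ z ^ (-((n:ℤ) + 2*i))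
            * psiF n m F i (mact γ z) := by rw [e2]; ring
    · rw [if_neg hN]
      apply Finset.sum_eq_zero
      intro p hp
      rw [if_neg (show ¬ δ ≤ N - p by omega)]
      ring
  · -- the projection
    intro z hz
    apply Polynomial.ext
    intro r
    rw [PiDM, Polynomial.finset_sum_coeff]
    by_cases hrm : r ≤ m
    · have hpick : ∀ b ∈ Finset.range (m+1), b ≠ r →
          (Polynomial.C ((PowerSeries.coeff (m - b + δ)
              (PowerSeries.mk fun i => if δ ≤ i then psiF n m F (i-δ) z else 0))
              / (b.factorial : ℂ)) * Polynomial.X ^ b).coeff r = 0 := by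
        intro b _ hbr
        rw [Polynomial.coeff_C_mul, Polynomial.coeff_X_pow, if_neg (fun hc => hbr hc.symm)]
        ring
      rw [Finset.sum_eq_single r (fun b hb hbr => hpick b hb hbr)
        (fun hr => absurd (Finset.mem_range.mpr (by omega)) hr)]
      rw [Polynomial.coeff_C_mul, Polynomial.coeff_X_pow, if_pos rfl, mul_one]
      rw [PowerSeries.coeff_mk, if_pos (by omega : δ ≤ m - r + δ)]
      have e1 : m - r + δ - δ = m - r := by omega
      rw [e1]
      have e2 := uu_part (n := n) (m := m) (F := F) (m+1) (m-r) (by omega) z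
      rw [show psiF n m F (m-r) z = ∑ j ∈ Finset.range (m+1), uu n m F j (m-r) z from rfl, e2]
      rw [phiF]
      have e3 : m - (m - r) = r := by omega
      rw [e3, mul_comm, mul_div_assoc, div_self (factC_ne r), mul_one]
    · have hzero : ∀ b ∈ Finset.range (m+1),
          (Polynomial.C ((PowerSeries.coeff (m - b + δ)
              (PowerSeries.mk fun i => if δ ≤ i then psiF n m F (i-δ) z else 0))
              / (b.factorial : ℂ)) * Polynomial.X ^ b).coeff r = 0 := by
        intro b hb
        have : b ≤ m := by have := Finset.mem_range.mp hb; omega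
        rw [Polynomial.coeff_C_mul, Polynomial.coeff_X_pow, if_neg (show ¬ r = b by omega)]
        ring
      rw [Finset.sum_eq_zero hzero]
      symm
      apply Polynomial.coeff_eq_zero_of_degree_lt
      calc (F z).degree ≤ (m : WithBot ℕ) := hdeg z
        _ < (r : WithBot ℕ) := by exact_mod_cast (by omega : m < r)
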